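/- Suppose the random environment is such that the quenched mean M₁ = E_μ(S₁) has the normal distribution N(0, σ₁²) under P, and for P-almost every realization of μ, the centered variable S₁ − E_μ(S₁) has the normal distribution N(0, σ₂²) under P_μ, where σ₁, σ₂ > 0 are constants. Then for every n ≥ 1, the real random variable P_μ( max_{i ≤ n} |n^{−1/2}Sᵢ| ≤ 1 ) (a function of the environment μ) has the same distribution as the random variable P( max_{i ≤ n} |σ₂·B_{i/n} + σ₁·W_{i/n}| ≤ 1 | W ), where B and W are two independent standard Brownian motions started at 0. -/

import Mathlib

open MeasureTheory ProbabilityTheory Filter Set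

noncomputable section

/-- A standard one-dimensional Brownian motion started at `0`, parametrized by `ℝ`
(only its restriction to nonnegative times is constrained). -/
def IsStandardBM {Ω : Type*} [MeasurableSpace Ω] (P : Measure Ω) (B : ℝ → Ω → ℝ) : Prop :=
  (∀ t : ℝ, Measurable (B t)) ∧
  (∀ ω, B 0 ω = 0) ∧
  (∀ ω, Continuous fun t => B t ω) ∧
  (∀ (n : ℕ) (t : ℕ → ℝ), Monotone t → 0 ≤ t 0 →
    iIndepFun
      (fun i : Fin n => fun ω => B (t (i + 1)) ω - B (t i) ω) P) ∧
  (∀ s t : ℝ, 0 ≤ s → s ≤ t →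
    P.map (fun ω => B t ω - B s ω) = gaussianReal 0 (Real.toNNReal (t - s)))

/-- A random walk in a time-dependent i.i.d. random environment.  `Ωe` is the sample
space of environments, `Ωq` the quenched sample space. -/
structure RWre (Ωe Ωq : Type*) [MeasurableSpace Ωe] [MeasurableSpace Ωq] where
  /-- law of the environment -/
  Pe : Measure Ωe
  probPe : IsProbabilityMeasure Pe
  /-- quenched law, given the environment -/
  Pq : Ωe → Measure Ωq
  probPq : ∀ ωe, IsProbabilityMeasure (Pq ωe)
  /-- the environment: a sequence of random probability measures on `ℝ` -/
  env : ℕ → Ωe → Measure ℝ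
  /-- the steps of the walk -/
  X : ℕ → Ωq → ℝ
  measX : ∀ n, Measurable (X n)
  measEnv : ∀ n, Measurable (env n)
  probEnv : ∀ n ωe, IsProbabilityMeasure (env n ωe)
  quenchedLaw : ∀ n ωe, (Pq ωe).map (X n) = env n ωe
  quenchedIndep : ∀ ωe, iIndepFun X (Pq ωe)
  envIndep : iIndepFun env Pe
  envIdent : ∀ n, Pe.map (env n) = Pe.map (env 0)

namespace RWre

variable {Ωe Ωq : Type*} [MeasurableSpace Ωe] [MeasurableSpace Ωq] (R : RWre Ωe Ωq)

/-- the walk: `S n = X 1 + ⋯ + X n` (indexing steps from `0`: `S 1 = X 0` is the paper's `S₁`). -/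
def S (n : ℕ) (ωq : Ωq) : ℝ := ∑ i ∈ Finset.range n, R.X i ωq

/-- quenched mean `Mₙ = E_μ Sₙ` -/
def M (n : ℕ) (ωe : Ωe) : ℝ := ∫ ωq, R.S n ωq ∂(R.Pq ωe)

/-- the centered walk `Uₙ = Sₙ - Mₙ` -/
def U (n : ℕ) (ωe : Ωe) (ωq : Ωq) : ℝ := R.S n ωq - R.M n ωe

/-- quenched variance `ηₙ = E_μ Uₙ²` -/
def eta (n : ℕ) (ωe : Ωe) : ℝ := ∫ ωq, (R.U n ωe ωq) ^ 2 ∂(R.Pq ωe)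

/-- `ζₙ = ∑_{k=1}^n E_μ |U_k - U_{k-1}|^α` -/
def zeta (α : ℝ) (n : ℕ) (ωe : Ωe) : ℝ :=
  ∑ k ∈ Finset.range n, ∫ ωq, |R.U (k + 1) ωe ωq - R.U k ωe ωq| ^ α ∂(R.Pq ωe)

/-- `σ = (E M₁²)^{1/2}` -/
def sigma : ℝ := Real.sqrt (∫ ωe, (R.M 1 ωe) ^ 2 ∂ R.Pe)

end RWre

/-- The broken line through the points `(k, g k)`, `k ∈ ℕ`, evaluated at `s ≥ 0`. -/
def brokenLine (g : ℕ → ℝ) (s : ℝ) : ℝ :=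
  g ⌊s⌋₊ + (s - ⌊s⌋₊) * (g (⌊s⌋₊ + 1) - g ⌊s⌋₊)

namespace BinormalAux
open scoped NNReal ENNReal
open Real

lemma iIndepFun_fin {Ω : Type*} [MeasurableSpace Ω] {P : Measure Ω} {f : ℕ → Ω → ℝ}
    (h : iIndepFun f P) (n : ℕ) :
    iIndepFun (fun i : Fin n => f i) P := by
  classical
  rw [iIndepFun_iff_measure_inter_preimage_eq_mul] at h ⊢
  intro S sets hsets
  have h' := h (S.map Fin.valEmbedding)
    (sets := fun j => if hj : j < n then sets ⟨j, hj⟩ else Set.univ) ?_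
  · have hset : (⋂ j ∈ S.map Fin.valEmbedding,
        f j ⁻¹' (if hj : j < n then sets ⟨j, hj⟩ else Set.univ))
        = ⋂ i ∈ S, f i ⁻¹' sets i := by
      ext x
      simp only [Set.mem_iInter, Finset.mem_map, Fin.valEmbedding_apply]
      constructor
      · intro hx i hi
        have := hx i ⟨i, hi, rfl⟩
        simpa [i.isLt] using this
      · rintro hx j ⟨i, hi, rfl⟩
        simpa [i.isLt] using hx i hi
    have hprod : (∏ j ∈ S.map Fin.valEmbedding,
        P (f j ⁻¹' (if hj : j < n then sets ⟨j, hj⟩ else Set.univ)))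
        = ∏ i ∈ S, P (f i ⁻¹' sets i) := by
      rw [Finset.prod_map]
      refine Finset.prod_congr rfl fun i hi => ?_
      simp [i.isLt]
    rw [hset, hprod] at h'
    exact h'
  · intro j hj
    by_cases hjn : j < n
    · obtain ⟨i, hi, rfl⟩ := Finset.mem_map.1 hj
      simpa [hjn] using hsets i hi
    · simp [hjn]

lemma map_tuple_eq_pi {Ω : Type*} [MeasurableSpace Ω] {P : Measure Ω} [IsProbabilityMeasure P]
    {n : ℕ} {f : Fin n → Ω → ℝ} (hf : ∀ i, Measurable (f i))
    (h : iIndepFun f P) :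
    P.map (fun ω i => f i ω) = Measure.pi (fun i => P.map (f i)) := by
  haveI : ∀ i, IsProbabilityMeasure (P.map (f i)) :=
    fun i => Measure.isProbabilityMeasure_map (hf i).aemeasurable
  refine (Measure.pi_eq fun s hs => ?_).symm
  rw [Measure.map_apply (measurable_pi_lambda _ hf) (MeasurableSet.univ_pi hs)]
  have hpre : (fun ω i => f i ω) ⁻¹' (Set.pi univ s) = ⋂ i ∈ Finset.univ, f i ⁻¹' s i := by
    ext x; simp [Set.mem_pi]
  rw [hpre, h.measure_inter_preimage_eq_mul Finset.univ (fun i _ => hs i)]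
  exact Finset.prod_congr rfl fun i _ => (Measure.map_apply (hf i) (hs i)).symm

lemma ae_congr_of_map_eq {Ωa : Type*} [MeasurableSpace Ωa] {P : Measure Ωa} {E : Type*}
    [MeasurableSpace E] {f g : Ωa → E} (hf : Measurable f) (hg : Measurable g)
    (hmap : P.map f = P.map g) {p : E → Prop} (hp : MeasurableSet {x | p x})
    (h : ∀ᵐ ω ∂P, p (f ω)) : ∀ᵐ ω ∂P, p (g ω) := by
  have h0 : P.map f {x | p x}ᶜ = 0 := by
    rw [Measure.map_apply hf hp.compl]
    exact ae_iff.1 h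
  have h1 : P (g ⁻¹' {x | p x}ᶜ) = 0 := by
    rw [← Measure.map_apply hg hp.compl, ← hmap, h0]
  exact ae_iff.2 h1

lemma integrable_mul_gaussianPDFReal (m : ℝ) (v : ℝ≥0) (hv : v ≠ 0) :
    Integrable (fun x : ℝ => x * gaussianPDFReal m v x) := by
  have hvpos : (0:ℝ) < (v:ℝ) := by positivity
  have hb : (0:ℝ) < (2 * (v:ℝ))⁻¹ := by positivity
  have h1 : Integrable (fun x : ℝ => x * rexp (-(2 * (v:ℝ))⁻¹ * x ^ 2)) := by
    have := integrable_rpow_mul_exp_neg_mul_sq hb (s := 1) (by norm_num)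
    refine this.congr (ae_of_all _ fun x => ?_)
    norm_num
  have h2 : Integrable (fun x : ℝ => (x - m) * rexp (-(2 * (v:ℝ))⁻¹ * (x - m) ^ 2)) :=
    h1.comp_sub_right m
  have h3 : Integrable (fun x : ℝ => m * rexp (-(2 * (v:ℝ))⁻¹ * (x - m) ^ 2)) :=
    ((integrable_exp_neg_mul_sq hb).comp_sub_right m).const_mul m
  have h4 := (h2.add h3).const_mul (√(2 * π * (v:ℝ)))⁻¹
  refine h4.congr (ae_of_all _ fun x => ?_)
  have hexp : -(x - m) ^ 2 / (2 * (v:ℝ)) = -(2 * (v:ℝ))⁻¹ * (x - m) ^ 2 := by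
    field_simp
  simp only [gaussianPDFReal, hexp, Pi.add_apply]
  ring

lemma integrable_id_gaussianReal (m : ℝ) (v : ℝ≥0) :
    Integrable (fun x : ℝ => x) (gaussianReal m v) := by
  by_cases hv : v = 0
  · subst hv
    rw [gaussianReal_zero_var]
    have hae : ∀ᵐ x ∂(Measure.dirac m), x = m := by
      rw [MeasureTheory.ae_dirac_eq]; exact Filter.eventually_pure.2 rfl
    exact (integrable_const m).congr (hae.mono fun x hx => hx.symm)
  · rw [gaussianReal_of_var_ne_zero _ hv]
    rw [integrable_withDensity_iff (measurable_gaussianPDF _ _)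
      (ae_of_all _ fun x => ENNReal.ofReal_lt_top)]
    refine (integrable_mul_gaussianPDFReal m v hv).congr (ae_of_all _ fun x => ?_)
    simp [gaussianPDF_def, ENNReal.toReal_ofReal (gaussianPDFReal_nonneg m v x)]

/-- the mean of a measure on `ℝ`, as an everywhere-defined measurable function -/
def meanFn (μ : Measure ℝ) : ℝ :=
  (∫⁻ x, ENNReal.ofReal x ∂μ).toReal - (∫⁻ x, ENNReal.ofReal (-x) ∂μ).toReal

lemma measurable_meanFn : Measurable meanFn := by
  apply Measurable.sub
  · exact (Measure.measurable_lintegral ENNReal.measurable_ofReal).ennreal_toReal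
  · exact (Measure.measurable_lintegral
      (ENNReal.measurable_ofReal.comp measurable_neg)).ennreal_toReal

lemma meanFn_eq_integral {μ : Measure ℝ} (h : Integrable (fun x : ℝ => x) μ) :
    meanFn μ = ∫ x, x ∂μ := by
  rw [integral_eq_lintegral_pos_part_sub_lintegral_neg_part h, meanFn]

lemma measure_Iic_add_eq_iInf (μ : Measure ℝ) [IsProbabilityMeasure μ] (c t : ℝ) :
    μ (Iic (t + c)) = ⨅ q : {q : ℚ // t < (q : ℝ)}, μ (Iic ((q : ℝ) + c)) := by
  obtain ⟨q₀, hq₀⟩ := exists_rat_gt t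
  have hInter : (⋂ q : {q : ℚ // t < (q : ℝ)}, Iic ((q : ℝ) + c)) = Iic (t + c) := by
    ext x
    simp only [Set.mem_iInter, Set.mem_Iic]
    constructor
    · intro hx
      by_contra hlt
      push_neg at hlt
      have : t < x - c := by linarith
      obtain ⟨q, hq1, hq2⟩ := exists_rat_btwn this
      have := hx ⟨q, hq1⟩
      simp only at this
      linarith
    · intro hx q
      have := q.2
      linarith
  rw [← hInter]
  rw [Directed.measure_iInter]
  · intro q; exact measurableSet_Iic.nullMeasurableSet
  · intro a b
    rcases le_total (a : ℚ) b with hab | hab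
    · have hab' : ((a : ℚ) : ℝ) ≤ ((b : ℚ) : ℝ) := by exact_mod_cast hab
      exact ⟨a, subset_rfl, Iic_subset_Iic.2 (by linarith)⟩
    · have hab' : ((b : ℚ) : ℝ) ≤ ((a : ℚ) : ℝ) := by exact_mod_cast hab
      exact ⟨b, Iic_subset_Iic.2 (by linarith), subset_rfl⟩
  · exact ⟨⟨q₀, hq₀⟩, (measure_lt_top μ _).ne⟩

/-- jointly measurable version of the cdf -/
def cdfFn (p : Measure ℝ × ℝ) : ℝ≥0∞ :=
  ⨅ q : ℚ, if p.2 < (q : ℝ) then p.1 (Iic (q : ℝ)) else 1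

lemma measurable_cdfFn : Measurable cdfFn := by
  apply Measurable.iInf
  intro q
  apply Measurable.ite
  · exact measurableSet_lt measurable_snd measurable_const
  · exact (Measure.measurable_coe measurableSet_Iic).comp measurable_fst
  · exact measurable_const

lemma cdfFn_eq (μ : Measure ℝ) [IsProbabilityMeasure μ] (t : ℝ) :
    cdfFn (μ, t) = μ (Iic t) := by
  obtain ⟨q₀, hq₀⟩ := exists_rat_gt t
  have h := measure_Iic_add_eq_iInf μ 0 t
  simp only [add_zero] at h
  rw [h, cdfFn]
  apply le_antisymm
  · refine le_iInf fun q => ?_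
    refine iInf_le_of_le (q : ℚ) ?_
    rw [if_pos q.2]
  · refine le_iInf fun q => ?_
    by_cases hq : t < (q : ℝ)
    · rw [if_pos hq]
      exact iInf_le _ (⟨q, hq⟩ : {q : ℚ // t < (q : ℝ)})
    · rw [if_neg hq]
      exact iInf_le_of_le ⟨q₀, hq₀⟩ prob_le_one

/-- the set of "good" probability measures: centered at their mean, they are `N(0, v)` -/
def good (v : ℝ≥0) : Set (Measure ℝ) :=
  {μ | μ Set.univ = 1 ∧
    ∀ q : ℚ, cdfFn (μ, (q : ℝ) + meanFn μ) = gaussianReal 0 v (Iic (q : ℝ))}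

lemma measurableSet_good (v : ℝ≥0) : MeasurableSet (good v) := by
  have hrw : good v = {μ : Measure ℝ | μ Set.univ = 1} ∩
      ⋂ q : ℚ, {μ : Measure ℝ | cdfFn (μ, (q : ℝ) + meanFn μ)
        = gaussianReal 0 v (Iic (q : ℝ))} := by
    ext μ; simp [good, Set.mem_iInter]
  rw [hrw]
  apply MeasurableSet.inter
  · exact (Measure.measurable_coe MeasurableSet.univ) (measurableSet_singleton 1)
  · refine MeasurableSet.iInter fun q => ?_
    exact (measurable_cdfFn.comp
      (measurable_id.prodMk (measurable_const.add measurable_meanFn)))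
      (measurableSet_singleton _)

lemma preimage_sub_Iic (m t : ℝ) : (fun x : ℝ => x - m) ⁻¹' Iic t = Iic (t + m) := by
  ext x; simp only [Set.mem_preimage, Set.mem_Iic]; constructor <;> intro <;> linarith

lemma good_iff {μ : Measure ℝ} [IsProbabilityMeasure μ] (v : ℝ≥0) :
    μ ∈ good v ↔ μ.map (fun x => x - meanFn μ) = gaussianReal 0 v := by
  have hmeas : Measurable (fun x : ℝ => x - meanFn μ) := measurable_id.sub_const _
  constructor
  · rintro ⟨-, h⟩
    haveI : IsProbabilityMeasure (μ.map (fun x => x - meanFn μ)) :=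
      Measure.isProbabilityMeasure_map hmeas.aemeasurable
    refine Measure.ext_of_Iic _ _ fun t => ?_
    have hg := measure_Iic_add_eq_iInf (gaussianReal 0 v) 0 t
    simp only [add_zero] at hg
    rw [Measure.map_apply hmeas measurableSet_Iic, preimage_sub_Iic,
      measure_Iic_add_eq_iInf μ (meanFn μ) t, hg]
    refine iInf_congr fun q => ?_
    rw [← h q, cdfFn_eq]
  · intro h
    refine ⟨measure_univ, fun q => ?_⟩
    rw [cdfFn_eq, ← preimage_sub_Iic (meanFn μ) (q : ℝ),
      ← Measure.map_apply hmeas measurableSet_Iic, h]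

def cutSum (n i : ℕ) (x : Fin n → ℝ) : ℝ := ∑ k : Fin n, if (k : ℕ) < i then x k else 0

lemma measurable_cutSum (n i : ℕ) : Measurable (cutSum n i) := by
  apply Finset.measurable_sum
  intro k _
  by_cases h : (k : ℕ) < i
  · simpa [h] using measurable_pi_apply k
  · simp [h]

lemma cutSum_eq {n i : ℕ} (hi : i ≤ n) (g : ℕ → ℝ) :
    cutSum n i (fun k => g k) = ∑ j ∈ Finset.range i, g j := by
  rw [cutSum, Fin.sum_univ_eq_sum_range (fun j => if j < i then g j else 0) n,
    ← Finset.sum_filter]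
  congr 1
  ext j
  simp only [Finset.mem_filter, Finset.mem_range]
  omega

def PhiSet (n : ℕ) (c : ℝ) (a : Fin n → ℝ) : Set (Fin n → ℝ) :=
  {z | ∀ i : ℕ, i ≤ n → |c * cutSum n i z + cutSum n i a| ≤ 1}

lemma measurableSet_PhiSet (n : ℕ) (c : ℝ) (a : Fin n → ℝ) :
    MeasurableSet (PhiSet n c a) := by
  have : PhiSet n c a = ⋂ (i : ℕ) (_ : i ≤ n),
      {z | |c * cutSum n i z + cutSum n i a| ≤ 1} := by
    ext z; simp [PhiSet, Set.mem_iInter]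
  rw [this]
  refine MeasurableSet.iInter fun i => MeasurableSet.iInter fun _ => ?_
  exact measurableSet_le (((measurable_cutSum n i).const_mul c).add_const _).abs
    measurable_const

def Phi (n : ℕ) (c : ℝ) (v : ℝ≥0) (a : Fin n → ℝ) : ℝ :=
  ((Measure.pi fun _ : Fin n => gaussianReal 0 v) (PhiSet n c a)).toReal

lemma measurable_Phi (n : ℕ) (c : ℝ) (v : ℝ≥0) : Measurable (Phi n c v) := by
  have hset : MeasurableSet {p : (Fin n → ℝ) × (Fin n → ℝ) |
      ∀ i : ℕ, i ≤ n → |c * cutSum n i p.2 + cutSum n i p.1| ≤ 1} := by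
    have : {p : (Fin n → ℝ) × (Fin n → ℝ) |
        ∀ i : ℕ, i ≤ n → |c * cutSum n i p.2 + cutSum n i p.1| ≤ 1}
        = ⋂ (i : ℕ) (_ : i ≤ n), {p : (Fin n → ℝ) × (Fin n → ℝ) |
            |c * cutSum n i p.2 + cutSum n i p.1| ≤ 1} := by
      ext p; simp [Set.mem_iInter]
    rw [this]
    refine MeasurableSet.iInter fun i => MeasurableSet.iInter fun _ => ?_
    refine measurableSet_le (Measurable.abs ?_) measurable_const
    exact (((measurable_cutSum n i).comp measurable_snd).const_mul c).add
      ((measurable_cutSum n i).comp measurable_fst)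
  exact (measurable_measure_prodMk_left
    (ν := Measure.pi fun _ : Fin n => gaussianReal 0 v) hset).ennreal_toReal

lemma prob_preimage_PhiSet {Ω' : Type*} [MeasurableSpace Ω'] {P : Measure Ω'} {n : ℕ}
    {v : ℝ≥0} {T : Ω' → Fin n → ℝ} (hT : Measurable T)
    (hmap : P.map T = Measure.pi fun _ : Fin n => gaussianReal 0 v) (c : ℝ)
    (a : Fin n → ℝ) :
    (P (T ⁻¹' PhiSet n c a)).toReal = Phi n c v a := by
  rw [Phi, ← hmap, Measure.map_apply hT (measurableSet_PhiSet n c a)]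

end BinormalAux


/-- **The bi-normal RWre example.** If the quenched mean `M₁` is `N(0, σ₁²)`-distributed and,
for `P`-almost every environment, `S₁ - E_μ S₁` is `N(0, σ₂²)`-distributed under the quenched
law, then for every `n ≥ 1` the random variable `P_μ(max_{i ≤ n} |n^{-1/2} Sᵢ| ≤ 1)` has the
same distribution as `P(max_{i ≤ n} |σ₂ B_{i/n} + σ₁ W_{i/n}| ≤ 1 | W)`, where `B, W` are two
independent standard Brownian motions. -/
theorem binormal_rwre_identity
    {Ωe Ωq ΩB ΩW : Type*} [MeasurableSpace Ωe] [MeasurableSpace Ωq]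
    [MeasurableSpace ΩB] [MeasurableSpace ΩW]
    (R : RWre Ωe Ωq)
    (σ₁ σ₂ : ℝ) (hσ₁ : 0 < σ₁) (hσ₂ : 0 < σ₂)
    (hMgauss : R.Pe.map (R.M 1) = gaussianReal 0 (Real.toNNReal (σ₁ ^ 2)))
    (hUgauss : ∀ᵐ ωe ∂ R.Pe,
      (R.Pq ωe).map (fun ωq => R.S 1 ωq - R.M 1 ωe) = gaussianReal 0 (Real.toNNReal (σ₂ ^ 2)))
    (PB : Measure ΩB) (PW : Measure ΩW)
    (hPB : IsProbabilityMeasure PB) (hPW : IsProbabilityMeasure PW)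
    (B : ℝ → ΩB → ℝ) (W : ℝ → ΩW → ℝ)
    (hB : IsStandardBM PB B) (hW : IsStandardBM PW W) :
    ∀ n : ℕ, 1 ≤ n →
      R.Pe.map (fun ωe =>
          (R.Pq ωe {ωq | ∀ i ≤ n, |(n : ℝ) ^ (-(1:ℝ)/2) * R.S i ωq| ≤ 1}).toReal) =
      PW.map (fun ωW =>
          (PB {ωB | ∀ i ≤ n, |σ₂ * B ((i : ℝ) / n) ωB + σ₁ * W ((i : ℝ) / n) ωW| ≤ 1}).toReal) := by
  classical
  intro n hn
  haveI := R.probPe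
  haveI := hPB
  haveI := hPW
  set c : ℝ := (n : ℝ) ^ (-(1:ℝ)/2) with hc_def
  have hnpos : (0:ℝ) < (n : ℝ) := by exact_mod_cast hn
  have hn0 : (n : ℝ) ≠ 0 := hnpos.ne'
  have hcpos : 0 < c := Real.rpow_pos_of_pos hnpos _
  have hc2 : c ^ 2 = ((n : ℝ))⁻¹ := by
    rw [hc_def, ← Real.rpow_natCast ((n : ℝ) ^ (-(1:ℝ)/2)) 2, ← Real.rpow_mul hnpos.le]
    norm_num
    exact Real.rpow_neg_one _
  set v₁ : NNReal := Real.toNNReal (σ₁ ^ 2) with hv₁_def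
  set v₂ : NNReal := Real.toNNReal (σ₂ ^ 2) with hv₂_def
  set vmean : NNReal := Real.toNNReal (c ^ 2) * v₁ with hvmean_def
  have hm_meas : ∀ k : ℕ, Measurable fun ωe => BinormalAux.meanFn (R.env k ωe) :=
    fun k => BinormalAux.measurable_meanFn.comp (R.measEnv k)
  have hS1 : ∀ ωq, R.S 1 ωq = R.X 0 ωq := fun ωq => by simp [RWre.S]
  -- Step 1: almost every environment is "good"
  have hgood0 : ∀ᵐ ωe ∂ R.Pe, R.env 0 ωe ∈ BinormalAux.good v₂ ∧
      BinormalAux.meanFn (R.env 0 ωe) = R.M 1 ωe := by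
    filter_upwards [hUgauss] with ωe hU
    haveI := R.probEnv 0 ωe
    haveI := R.probPq ωe
    have hU' : (R.Pq ωe).map (fun ωq => R.X 0 ωq - R.M 1 ωe) = gaussianReal 0 v₂ := by
      rw [← hU]
      exact Measure.map_congr (Filter.Eventually.of_forall fun ωq => by simp only [hS1 ωq])
    have hcent : (R.env 0 ωe).map (fun x => x - R.M 1 ωe) = gaussianReal 0 v₂ := by
      rw [← R.quenchedLaw 0 ωe,
        Measure.map_map (show Measurable (fun x : ℝ => x - R.M 1 ωe) from
          measurable_id.sub_const _) (R.measX 0)]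
      exact hU'
    have hint' : Integrable (fun x : ℝ => x)
        ((R.env 0 ωe).map (fun x => x - R.M 1 ωe)) := by
      rw [hcent]; exact BinormalAux.integrable_id_gaussianReal 0 v₂
    have hint2 : Integrable (fun x : ℝ => x - R.M 1 ωe) (R.env 0 ωe) := by
      rwa [integrable_map_measure
        (show AEStronglyMeasurable (fun x : ℝ => x)
            ((R.env 0 ωe).map (fun x => x - R.M 1 ωe)) from aestronglyMeasurable_id)
        (show Measurable (fun x : ℝ => x - R.M 1 ωe) from
          measurable_id.sub_const _).aemeasurable] at hint'
    have hint : Integrable (fun x : ℝ => x) (R.env 0 ωe) := by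
      refine (hint2.add (integrable_const (R.M 1 ωe))).congr
        (Filter.Eventually.of_forall fun x => by simp)
    have hmean : BinormalAux.meanFn (R.env 0 ωe) = R.M 1 ωe := by
      rw [BinormalAux.meanFn_eq_integral hint, ← R.quenchedLaw 0 ωe,
        integral_map (R.measX 0).aemeasurable
          (show AEStronglyMeasurable (fun x : ℝ => x)
            ((R.Pq ωe).map (R.X 0)) from aestronglyMeasurable_id)]
      simp only [RWre.M]
      exact (integral_congr_ae (Filter.Eventually.of_forall fun ωq => hS1 ωq)).symm
    refine ⟨?_, hmean⟩
    rw [BinormalAux.good_iff, hmean]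
    exact hcent
  have hgoodk : ∀ k : ℕ, ∀ᵐ ωe ∂ R.Pe, R.env k ωe ∈ BinormalAux.good v₂ := by
    intro k
    exact BinormalAux.ae_congr_of_map_eq (R.measEnv 0) (R.measEnv k)
      (R.envIdent k).symm (BinormalAux.measurableSet_good v₂)
      (hgood0.mono fun ωe h => h.1)
  have hgood_all : ∀ᵐ ωe ∂ R.Pe, ∀ k : Fin n, R.env (k : ℕ) ωe ∈ BinormalAux.good v₂ :=
    ae_all_iff.2 fun k => hgoodk k
  -- Step 2: the law of the (scaled) quenched means
  have hmv_meas : Measurable (fun ωe (k : Fin n) =>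
      c * BinormalAux.meanFn (R.env (k : ℕ) ωe)) :=
    measurable_pi_lambda _ fun k => (hm_meas k).const_mul c
  have hmarg : ∀ k : ℕ, R.Pe.map (fun ωe => c * BinormalAux.meanFn (R.env k ωe))
      = gaussianReal 0 vmean := by
    intro k
    have h1 : R.Pe.map (fun ωe => c * BinormalAux.meanFn (R.env k ωe))
        = ((R.Pe.map (R.env k)).map BinormalAux.meanFn).map (fun x => c * x) := by
      rw [Measure.map_map BinormalAux.measurable_meanFn (R.measEnv k),
        Measure.map_map (show Measurable (fun x : ℝ => c * x) from
          measurable_id.const_mul c)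
          (BinormalAux.measurable_meanFn.comp (R.measEnv k))]
      rfl
    rw [h1, R.envIdent k, Measure.map_map BinormalAux.measurable_meanFn (R.measEnv 0)]
    have h2 : R.Pe.map (BinormalAux.meanFn ∘ R.env 0) = R.Pe.map (R.M 1) :=
      Measure.map_congr (hgood0.mono fun ωe h => h.2)
    rw [h2, hMgauss, gaussianReal_map_const_mul (μ := 0) (v := v₁) c, mul_zero]
    congr 1
    apply NNReal.coe_injective
    simp [hvmean_def, Real.coe_toNNReal _ (sq_nonneg c)]
  have hmvlaw : R.Pe.map (fun ωe (k : Fin n) => c * BinormalAux.meanFn (R.env (k : ℕ) ωe))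
      = Measure.pi fun _ : Fin n => gaussianReal 0 vmean := by
    have hind : iIndepFun
        (fun k : ℕ => fun ωe => c * BinormalAux.meanFn (R.env k ωe)) R.Pe :=
      R.envIndep.comp (fun _ μ => c * BinormalAux.meanFn μ)
        (fun _ => BinormalAux.measurable_meanFn.const_mul c)
    have h := BinormalAux.map_tuple_eq_pi
      (f := fun i : Fin n => fun ωe => c * BinormalAux.meanFn (R.env (i : ℕ) ωe))
      (fun i => (hm_meas i).const_mul c) (BinormalAux.iIndepFun_fin hind n)
    rw [h]
    congr 1
    funext i
    exact hmarg i
  -- Step 3: a.e. identification of the quenched probability with Phi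
  have hae : (fun ωe =>
      (R.Pq ωe {ωq | ∀ i ≤ n, |c * R.S i ωq| ≤ 1}).toReal)
      =ᵐ[R.Pe] fun ωe => BinormalAux.Phi n c v₂
        (fun k : Fin n => c * BinormalAux.meanFn (R.env (k : ℕ) ωe)) := by
    filter_upwards [hgood_all] with ωe hg
    haveI := R.probPq ωe
    have hT_meas : Measurable (fun ωq (k : Fin n) =>
        R.X (k : ℕ) ωq - BinormalAux.meanFn (R.env (k : ℕ) ωe)) :=
      measurable_pi_lambda _ fun k => (R.measX k).sub_const _
    have hmargq : ∀ i : Fin n, (R.Pq ωe).map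
        (fun ωq => R.X (i : ℕ) ωq - BinormalAux.meanFn (R.env (i : ℕ) ωe))
        = gaussianReal 0 v₂ := by
      intro i
      haveI := R.probEnv (i : ℕ) ωe
      obtain ⟨A, hA⟩ : ∃ A, A = BinormalAux.meanFn (R.env (i : ℕ) ωe) := ⟨_, rfl⟩
      rw [← hA]
      have h := (BinormalAux.good_iff (μ := R.env (i : ℕ) ωe) v₂).1 (hg i)
      rw [← hA, ← R.quenchedLaw (i : ℕ) ωe,
        Measure.map_map (show Measurable (fun x : ℝ => x - A) from
          measurable_id.sub_const _) (R.measX _)] at h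
      exact h
    have hind : iIndepFun
        (fun i : Fin n => fun ωq =>
          R.X (i : ℕ) ωq - BinormalAux.meanFn (R.env (i : ℕ) ωe)) (R.Pq ωe) :=
      (BinormalAux.iIndepFun_fin (R.quenchedIndep ωe) n).comp
        (fun i x => x - BinormalAux.meanFn (R.env (i : ℕ) ωe))
        (fun i => measurable_id.sub_const _)
    have hTlaw : (R.Pq ωe).map (fun ωq (k : Fin n) =>
        R.X (k : ℕ) ωq - BinormalAux.meanFn (R.env (k : ℕ) ωe))
        = Measure.pi fun _ : Fin n => gaussianReal 0 v₂ := by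
      have h := BinormalAux.map_tuple_eq_pi
        (f := fun i : Fin n => fun ωq =>
          R.X (i : ℕ) ωq - BinormalAux.meanFn (R.env (i : ℕ) ωe))
        (fun i => (R.measX _).sub_const _) hind
      rw [h]
      congr 1
      funext i
      exact hmargq i
    have hev : {ωq | ∀ i ≤ n, |c * R.S i ωq| ≤ 1}
        = (fun ωq (k : Fin n) =>
            R.X (k : ℕ) ωq - BinormalAux.meanFn (R.env (k : ℕ) ωe)) ⁻¹'
          BinormalAux.PhiSet n c
            (fun k : Fin n => c * BinormalAux.meanFn (R.env (k : ℕ) ωe)) := by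
      ext ωq
      simp only [Set.mem_setOf_eq, Set.mem_preimage, BinormalAux.PhiSet]
      refine forall₂_congr fun i hi => ?_
      rw [BinormalAux.cutSum_eq hi
          (fun j => R.X j ωq - BinormalAux.meanFn (R.env j ωe)),
        BinormalAux.cutSum_eq hi
          (fun j => c * BinormalAux.meanFn (R.env j ωe))]
      have harg : c * (∑ j ∈ Finset.range i,
            (R.X j ωq - BinormalAux.meanFn (R.env j ωe)))
          + ∑ j ∈ Finset.range i, c * BinormalAux.meanFn (R.env j ωe)
          = c * R.S i ωq := by
        rw [RWre.S, Finset.sum_sub_distrib, ← Finset.mul_sum]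
        ring
      rw [harg]
    rw [hev]
    exact BinormalAux.prob_preimage_PhiSet hT_meas hTlaw c _
  -- Step 4: conclusion for the environment side
  have hLHS : R.Pe.map (fun ωe =>
      (R.Pq ωe {ωq | ∀ i ≤ n, |c * R.S i ωq| ≤ 1}).toReal)
      = (Measure.pi fun _ : Fin n => gaussianReal 0 vmean).map
          (BinormalAux.Phi n c v₂) := by
    calc R.Pe.map (fun ωe =>
        (R.Pq ωe {ωq | ∀ i ≤ n, |c * R.S i ωq| ≤ 1}).toReal)
        = R.Pe.map ((BinormalAux.Phi n c v₂) ∘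
            (fun ωe (k : Fin n) => c * BinormalAux.meanFn (R.env (k : ℕ) ωe))) :=
          Measure.map_congr hae
      _ = (R.Pe.map (fun ωe (k : Fin n) =>
            c * BinormalAux.meanFn (R.env (k : ℕ) ωe))).map (BinormalAux.Phi n c v₂) :=
          (Measure.map_map (BinormalAux.measurable_Phi n c v₂) hmv_meas).symm
      _ = _ := by rw [hmvlaw]
  -- Step 5: the Brownian side
  have htmono : Monotone (fun j : ℕ => (j : ℝ) / (n : ℝ)) := fun a b hab => by
    have h : (a : ℝ) ≤ (b : ℝ) := by exact_mod_cast hab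
    dsimp only
    gcongr
  have h0le : ∀ k : ℕ, 0 ≤ ((k : ℕ) : ℝ) / (n : ℝ) := fun k => by positivity
  have hle : ∀ k : ℕ, ((k : ℕ) : ℝ) / (n : ℝ) ≤ (((k + 1 : ℕ) : ℝ)) / (n : ℝ) :=
    fun k => htmono (Nat.le_succ k)
  have hfrac : ∀ k : ℕ, (((k + 1 : ℕ) : ℝ)) / (n : ℝ) - ((k : ℕ) : ℝ) / (n : ℝ)
      = 1 / (n : ℝ) := by
    intro k
    push_cast
    field_simp
    ring
  have hWinclaw : ∀ k : ℕ, PW.map (fun ω =>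
      σ₁ * (W (((k + 1 : ℕ) : ℝ) / (n : ℝ)) ω - W (((k : ℕ) : ℝ) / (n : ℝ)) ω))
      = gaussianReal 0 vmean := by
    intro k
    have hinc := hW.2.2.2.2 (((k : ℕ) : ℝ) / (n : ℝ)) (((k + 1 : ℕ) : ℝ) / (n : ℝ))
      (h0le k) (hle k)
    have hmeasinc : Measurable (fun ω =>
        W (((k + 1 : ℕ) : ℝ) / (n : ℝ)) ω - W (((k : ℕ) : ℝ) / (n : ℝ)) ω) :=
      (hW.1 _).sub (hW.1 _)
    have h1 : PW.map (fun ω =>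
        σ₁ * (W (((k + 1 : ℕ) : ℝ) / (n : ℝ)) ω - W (((k : ℕ) : ℝ) / (n : ℝ)) ω))
        = (PW.map (fun ω =>
            W (((k + 1 : ℕ) : ℝ) / (n : ℝ)) ω - W (((k : ℕ) : ℝ) / (n : ℝ)) ω)).map
          (fun x => σ₁ * x) := by
      rw [Measure.map_map (show Measurable (fun x : ℝ => σ₁ * x) from
        measurable_id.const_mul σ₁) hmeasinc]
      rfl
    rw [h1, hinc, hfrac k, gaussianReal_map_const_mul, mul_zero]
    congr 1
    apply NNReal.coe_injective
    simp only [hvmean_def, hv₁_def, NNReal.coe_mul, NNReal.coe_mk,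
      Real.coe_toNNReal _ (sq_nonneg σ₁), Real.coe_toNNReal _ (sq_nonneg c),
      Real.coe_toNNReal _ (le_of_lt (by positivity : (0:ℝ) < 1 / (n : ℝ)))]
    rw [hc2, ← one_div]
    ring
  have hBinclaw : ∀ k : ℕ, PB.map (fun ω =>
      (c⁻¹ * σ₂) * (B (((k + 1 : ℕ) : ℝ) / (n : ℝ)) ω - B (((k : ℕ) : ℝ) / (n : ℝ)) ω))
      = gaussianReal 0 v₂ := by
    intro k
    have hinc := hB.2.2.2.2 (((k : ℕ) : ℝ) / (n : ℝ)) (((k + 1 : ℕ) : ℝ) / (n : ℝ))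
      (h0le k) (hle k)
    have hmeasinc : Measurable (fun ω =>
        B (((k + 1 : ℕ) : ℝ) / (n : ℝ)) ω - B (((k : ℕ) : ℝ) / (n : ℝ)) ω) :=
      (hB.1 _).sub (hB.1 _)
    have h1 : PB.map (fun ω =>
        (c⁻¹ * σ₂) * (B (((k + 1 : ℕ) : ℝ) / (n : ℝ)) ω - B (((k : ℕ) : ℝ) / (n : ℝ)) ω))
        = (PB.map (fun ω =>
            B (((k + 1 : ℕ) : ℝ) / (n : ℝ)) ω - B (((k : ℕ) : ℝ) / (n : ℝ)) ω)).map
          (fun x => (c⁻¹ * σ₂) * x) := by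
      rw [Measure.map_map (show Measurable (fun x : ℝ => (c⁻¹ * σ₂) * x) from
        measurable_id.const_mul _) hmeasinc]
      rfl
    rw [h1, hinc, hfrac k, gaussianReal_map_const_mul, mul_zero]
    congr 1
    apply NNReal.coe_injective
    have hcinv : (c⁻¹) ^ 2 = (n : ℝ) := by
      rw [inv_pow, hc2, inv_inv]
    simp only [NNReal.coe_mul, NNReal.coe_mk, hv₂_def,
      Real.coe_toNNReal _ (sq_nonneg σ₂),
      Real.coe_toNNReal _ (le_of_lt (by positivity : (0:ℝ) < 1 / (n : ℝ)))]
    rw [mul_pow, hcinv]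
    field_simp
  have haW_meas : Measurable (fun ωW (k : Fin n) =>
      σ₁ * (W ((((k : ℕ) + 1 : ℕ) : ℝ) / (n : ℝ)) ωW - W (((k : ℕ) : ℝ) / (n : ℝ)) ωW)) :=
    measurable_pi_lambda _ fun k => ((hW.1 _).sub (hW.1 _)).const_mul σ₁
  have haWlaw : PW.map (fun ωW (k : Fin n) =>
      σ₁ * (W ((((k : ℕ) + 1 : ℕ) : ℝ) / (n : ℝ)) ωW - W (((k : ℕ) : ℝ) / (n : ℝ)) ωW))
      = Measure.pi fun _ : Fin n => gaussianReal 0 vmean := by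
    have hindW : iIndepFun
        (fun i : Fin n => fun ω =>
          σ₁ * (W ((((i : ℕ) + 1 : ℕ) : ℝ) / (n : ℝ)) ω - W (((i : ℕ) : ℝ) / (n : ℝ)) ω)) PW :=
      (hW.2.2.2.1 n (fun j : ℕ => (j : ℝ) / (n : ℝ)) htmono (by positivity)).comp
        (fun _ x => σ₁ * x) (fun _ => measurable_id.const_mul σ₁)
    have h := BinormalAux.map_tuple_eq_pi
      (f := fun i : Fin n => fun ω =>
        σ₁ * (W ((((i : ℕ) + 1 : ℕ) : ℝ) / (n : ℝ)) ω - W (((i : ℕ) : ℝ) / (n : ℝ)) ω))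
      (fun i => ((hW.1 _).sub (hW.1 _)).const_mul σ₁) hindW
    rw [h]
    congr 1
    funext i
    exact hWinclaw i
  have hRHSfun : ∀ ωW,
      (PB {ωB | ∀ i ≤ n, |σ₂ * B ((i : ℝ) / n) ωB + σ₁ * W ((i : ℝ) / n) ωW| ≤ 1}).toReal
      = BinormalAux.Phi n c v₂ (fun k : Fin n =>
          σ₁ * (W ((((k : ℕ) + 1 : ℕ) : ℝ) / (n : ℝ)) ωW - W (((k : ℕ) : ℝ) / (n : ℝ)) ωW)) := by
    intro ωW
    have hZ_meas : Measurable (fun ωB (k : Fin n) =>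
        (c⁻¹ * σ₂) * (B ((((k : ℕ) + 1 : ℕ) : ℝ) / (n : ℝ)) ωB
          - B (((k : ℕ) : ℝ) / (n : ℝ)) ωB)) :=
      measurable_pi_lambda _ fun k => ((hB.1 _).sub (hB.1 _)).const_mul _
    have hindB : iIndepFun
        (fun i : Fin n => fun ω =>
          (c⁻¹ * σ₂) * (B ((((i : ℕ) + 1 : ℕ) : ℝ) / (n : ℝ)) ω
            - B (((i : ℕ) : ℝ) / (n : ℝ)) ω)) PB :=
      (hB.2.2.2.1 n (fun j : ℕ => (j : ℝ) / (n : ℝ)) htmono (by positivity)).comp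
        (fun _ x => (c⁻¹ * σ₂) * x) (fun _ => measurable_id.const_mul _)
    have hZlaw : PB.map (fun ωB (k : Fin n) =>
        (c⁻¹ * σ₂) * (B ((((k : ℕ) + 1 : ℕ) : ℝ) / (n : ℝ)) ωB
          - B (((k : ℕ) : ℝ) / (n : ℝ)) ωB))
        = Measure.pi fun _ : Fin n => gaussianReal 0 v₂ := by
      have h := BinormalAux.map_tuple_eq_pi
        (f := fun i : Fin n => fun ω =>
          (c⁻¹ * σ₂) * (B ((((i : ℕ) + 1 : ℕ) : ℝ) / (n : ℝ)) ω
            - B (((i : ℕ) : ℝ) / (n : ℝ)) ω))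
        (fun i => ((hB.1 _).sub (hB.1 _)).const_mul _) hindB
      rw [h]
      congr 1
      funext i
      exact hBinclaw i
    have h00 : ((0 : ℕ) : ℝ) / (n : ℝ) = 0 := by simp
    have hev : {ωB | ∀ i ≤ n, |σ₂ * B ((i : ℝ) / n) ωB + σ₁ * W ((i : ℝ) / n) ωW| ≤ 1}
        = (fun ωB (k : Fin n) =>
            (c⁻¹ * σ₂) * (B ((((k : ℕ) + 1 : ℕ) : ℝ) / (n : ℝ)) ωB
              - B (((k : ℕ) : ℝ) / (n : ℝ)) ωB)) ⁻¹'
          BinormalAux.PhiSet n c (fun k : Fin n =>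
            σ₁ * (W ((((k : ℕ) + 1 : ℕ) : ℝ) / (n : ℝ)) ωW
              - W (((k : ℕ) : ℝ) / (n : ℝ)) ωW)) := by
      ext ωB
      simp only [Set.mem_setOf_eq, Set.mem_preimage, BinormalAux.PhiSet]
      refine forall₂_congr fun i hi => ?_
      rw [BinormalAux.cutSum_eq hi (fun j =>
          (c⁻¹ * σ₂) * (B (((j + 1 : ℕ) : ℝ) / (n : ℝ)) ωB
            - B (((j : ℕ) : ℝ) / (n : ℝ)) ωB)),
        BinormalAux.cutSum_eq hi (fun j =>
          σ₁ * (W (((j + 1 : ℕ) : ℝ) / (n : ℝ)) ωW - W (((j : ℕ) : ℝ) / (n : ℝ)) ωW)),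
        ← Finset.mul_sum, ← Finset.mul_sum,
        Finset.sum_range_sub (fun j => B (((j : ℕ) : ℝ) / (n : ℝ)) ωB),
        Finset.sum_range_sub (fun j => W (((j : ℕ) : ℝ) / (n : ℝ)) ωW),
        h00, hB.2.1 ωB, hW.2.1 ωW]
      have harg : c * ((c⁻¹ * σ₂) * (B ((i : ℝ) / (n : ℝ)) ωB - 0))
          + σ₁ * (W ((i : ℝ) / (n : ℝ)) ωW - 0)
          = σ₂ * B ((i : ℝ) / (n : ℝ)) ωB + σ₁ * W ((i : ℝ) / (n : ℝ)) ωW := by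
        rw [sub_zero, sub_zero, ← mul_assoc, ← mul_assoc, mul_inv_cancel₀ hcpos.ne',
          one_mul]
      rw [harg]
    rw [hev]
    exact BinormalAux.prob_preimage_PhiSet hZ_meas hZlaw c _
  have hRHS : PW.map (fun ωW =>
      (PB {ωB | ∀ i ≤ n, |σ₂ * B ((i : ℝ) / n) ωB + σ₁ * W ((i : ℝ) / n) ωW| ≤ 1}).toReal)
      = (Measure.pi fun _ : Fin n => gaussianReal 0 vmean).map
          (BinormalAux.Phi n c v₂) := by
    have h1 : (fun ωW =>
        (PB {ωB | ∀ i ≤ n, |σ₂ * B ((i : ℝ) / n) ωB + σ₁ * W ((i : ℝ) / n) ωW| ≤ 1}).toReal)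
        = (BinormalAux.Phi n c v₂) ∘ (fun ωW (k : Fin n) =>
            σ₁ * (W ((((k : ℕ) + 1 : ℕ) : ℝ) / (n : ℝ)) ωW
              - W (((k : ℕ) : ℝ) / (n : ℝ)) ωW)) :=
      funext fun ωW => hRHSfun ωW
    rw [h1, ← Measure.map_map (BinormalAux.measurable_Phi n c v₂) haW_meas, haWlaw]
  exact hLHS.trans hRHS.symm

end
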